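/- Let E be a Banach space, (T(t))_{t≥0} a strongly continuous semigroup on E with ‖T(t)‖ ≤ N e^{-ωt} for some N ≥ 1, ω > 0, and let R : E → E satisfy ‖R(v)‖ ≤ d(r)‖v‖ whenever ‖v‖ ≤ r, where d : [0,∞) → [0,∞) is increasing with d(0) = 0 and d continuous at 0. Suppose w ∈ C([0,t₁), E) satisfies w(t) = T(t)w₀ + ∫₀^t T(t-s) R(w(s)) ds and ‖w(s)‖ ≤ r on [0,t₁). Then for every ω' ∈ (0,ω) there exists r > 0 small enough and M ≥ 1 such that ‖w(t)‖ ≤ M e^{-ω't} ‖w₀‖ for t ∈ [0,t₁). -/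
import Mathlib


open MeasureTheory Set

/-- Simplified (non-singular) principle of linearized stability: an
exponentially decaying semigroup plus a superlinearly small remainder yields
exponential decay of small mild solutions. -/
theorem stmt18 {E : Type*} [NormedAddCommGroup E] [NormedSpace ℝ E] [CompleteSpace E]
    (T : ℝ → E →L[ℝ] E) (N ω : ℝ) (hN : 1 ≤ N) (hω : 0 < ω)
    (hT : ∀ t ≥ (0:ℝ), ‖T t‖ ≤ N * Real.exp (-ω * t))
    (R : E → E) (d : ℝ → ℝ) (hd0 : d 0 = 0) (hdmono : MonotoneOn d (Ici 0))
    (hdcont : ContinuousAt d 0) (hdnn : ∀ r ≥ (0:ℝ), 0 ≤ d r)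
    (hR : ∀ r ≥ (0:ℝ), ∀ v : E, ‖v‖ ≤ r → ‖R v‖ ≤ d r * ‖v‖) :
    ∀ ω' ∈ Ioo 0 ω, ∃ r > (0:ℝ), ∃ M ≥ (1:ℝ), ∀ t₁ > (0:ℝ), ∀ (w : ℝ → E) (w₀ : E),
      ContinuousOn w (Ico 0 t₁) →
      (∀ t ∈ Ico (0:ℝ) t₁, w t = T t w₀ + ∫ s in (0:ℝ)..t, T (t - s) (R (w s))) →
      (∀ s ∈ Ico (0:ℝ) t₁, ‖w s‖ ≤ r) →
      ∀ t ∈ Ico (0:ℝ) t₁, ‖w t‖ ≤ M * Real.exp (-ω' * t) * ‖w₀‖ := by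
  rintro ω' ⟨hω'0, hω'ω⟩
  have hNpos : (0:ℝ) < N := lt_of_lt_of_le one_pos hN
  -- choose r small so that N * d r < ω - ω'
  obtain ⟨δ, hδpos, hδ⟩ := Metric.continuousAt_iff.mp hdcont ((ω - ω') / N)
    (div_pos (by linarith) hNpos)
  set r : ℝ := δ / 2 with hr_def
  have hrpos : 0 < r := by positivity
  have hdr : N * d r < ω - ω' := by
    have h1 : dist r 0 < δ := by
      rw [Real.dist_eq, sub_zero, abs_of_pos hrpos]; linarith
    have h2 := hδ h1
    rw [Real.dist_eq, hd0, sub_zero] at h2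
    have h3 : d r < (ω - ω') / N := lt_of_abs_lt h2
    calc N * d r < N * ((ω - ω') / N) := by
          exact mul_lt_mul_of_pos_left h3 hNpos
      _ = ω - ω' := by field_simp
  have hdrnn : 0 ≤ d r := hdnn r hrpos.le
  set C : ℝ := N * d r with hC_def
  have hCnn : 0 ≤ C := mul_nonneg hNpos.le hdrnn
  refine ⟨r, hrpos, N, hN, ?_⟩
  intro t₁ ht₁ w w₀ hw heq hbd t ht
  obtain ⟨ht0, htt₁⟩ := ht
  set A : ℝ := N * ‖w₀‖ with hA_def
  have hAnn : 0 ≤ A := mul_nonneg hNpos.le (norm_nonneg _)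
  set g : ℝ → ℝ := fun s => Real.exp (ω * s) * ‖w s‖ with hg_def
  have hgcont : ContinuousOn g (Ico 0 t₁) :=
    ((Real.continuous_exp.comp (continuous_const.mul continuous_id)).continuousOn).mul hw.norm
  have hgnn : ∀ s, 0 ≤ g s := fun s => mul_nonneg (Real.exp_pos _).le (norm_nonneg _)
  set F : ℝ → ℝ := fun τ => ∫ s in (0:ℝ)..τ, g s with hF_def
  have hsub : ∀ τ ∈ Icc (0:ℝ) t, Icc (0:ℝ) τ ⊆ Ico 0 t₁ := by
    intro τ hτ s hs
    exact ⟨hs.1, lt_of_le_of_lt (hs.2.trans hτ.2) htt₁⟩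
  have hgint : ∀ τ ∈ Icc (0:ℝ) t, IntervalIntegrable g volume 0 τ := by
    intro τ hτ
    exact (hgcont.mono (hsub τ hτ)).intervalIntegrable_of_Icc hτ.1
  have hFnn : ∀ τ ∈ Icc (0:ℝ) t, 0 ≤ F τ := by
    intro τ hτ
    exact intervalIntegral.integral_nonneg hτ.1 (fun s _ => hgnn s)
  -- key integral inequality
  have key : ∀ τ ∈ Icc (0:ℝ) t, g τ ≤ C * F τ + A := by
    intro τ hτ
    have hτm : τ ∈ Ico (0:ℝ) t₁ := ⟨hτ.1, lt_of_le_of_lt hτ.2 htt₁⟩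
    have h1 : ‖(T τ) w₀‖ ≤ N * Real.exp (-ω * τ) * ‖w₀‖ :=
      ((T τ).le_opNorm w₀).trans (mul_le_mul_of_nonneg_right (hT τ hτ.1) (norm_nonneg _))
    have hpt : ∀ s ∈ Icc (0:ℝ) τ, ‖T (τ - s) (R (w s))‖ ≤ C * Real.exp (-ω * τ) * g s := by
      intro s hs
      have hs' : s ∈ Ico (0:ℝ) t₁ := hsub τ hτ hs
      have hts : (0:ℝ) ≤ τ - s := by linarith [hs.2]
      have hTb : ‖T (τ - s)‖ ≤ N * Real.exp (-ω * (τ - s)) := hT _ hts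
      have hRb : ‖R (w s)‖ ≤ d r * ‖w s‖ := hR r hrpos.le (w s) (hbd s hs')
      calc ‖T (τ - s) (R (w s))‖ ≤ ‖T (τ - s)‖ * ‖R (w s)‖ := (T (τ - s)).le_opNorm _
        _ ≤ (N * Real.exp (-ω * (τ - s))) * (d r * ‖w s‖) := by
            exact mul_le_mul hTb hRb (norm_nonneg _) (by positivity)
        _ = C * Real.exp (-ω * τ) * g s := by
            rw [show -ω * (τ - s) = -ω * τ + ω * s by ring, Real.exp_add, hg_def]
            ring
    have hIbound : ‖∫ s in (0:ℝ)..τ, T (τ - s) (R (w s))‖ ≤ C * Real.exp (-ω * τ) * F τ := by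
      by_cases hint : IntervalIntegrable (fun s => T (τ - s) (R (w s))) volume 0 τ
      · calc ‖∫ s in (0:ℝ)..τ, T (τ - s) (R (w s))‖
            ≤ ∫ s in (0:ℝ)..τ, ‖T (τ - s) (R (w s))‖ :=
              intervalIntegral.norm_integral_le_integral_norm hτ.1
          _ ≤ ∫ s in (0:ℝ)..τ, C * Real.exp (-ω * τ) * g s := by
              refine intervalIntegral.integral_mono_on hτ.1 hint.norm
                (((hgint τ hτ).const_mul _)) hpt
          _ = C * Real.exp (-ω * τ) * F τ := by
              rw [hF_def]
              exact intervalIntegral.integral_const_mul _ _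
      · rw [intervalIntegral.integral_undef hint, norm_zero]
        have := hFnn τ hτ
        positivity
    have h2 : ‖w τ‖ ≤ N * Real.exp (-ω * τ) * ‖w₀‖ + C * Real.exp (-ω * τ) * F τ := by
      rw [heq τ hτm]
      exact (norm_add_le _ _).trans (add_le_add h1 hIbound)
    have hE : Real.exp (ω * τ) * Real.exp (-ω * τ) = 1 := by
      rw [← Real.exp_add, show ω * τ + -ω * τ = 0 by ring, Real.exp_zero]
    have hepos := Real.exp_pos (ω * τ)
    have : g τ = Real.exp (ω * τ) * ‖w τ‖ := rfl
    rw [this, hA_def]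
    have h4 : Real.exp (ω * τ) * (N * Real.exp (-ω * τ) * ‖w₀‖ + C * Real.exp (-ω * τ) * F τ)
        = C * F τ + N * ‖w₀‖ := by
      calc Real.exp (ω * τ) * (N * Real.exp (-ω * τ) * ‖w₀‖ + C * Real.exp (-ω * τ) * F τ)
          = (Real.exp (ω * τ) * Real.exp (-ω * τ)) * (N * ‖w₀‖)
            + (Real.exp (ω * τ) * Real.exp (-ω * τ)) * (C * F τ) := by ring
        _ = C * F τ + N * ‖w₀‖ := by rw [hE]; ring
    linarith [mul_le_mul_of_nonneg_left h2 hepos.le]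
  -- Gronwall
  have hFcont : ContinuousOn F (Icc 0 t) := by
    have hint : IntegrableOn g (Icc (0:ℝ) t) volume :=
      (hgcont.mono (hsub t ⟨ht0, le_refl t⟩)).integrableOn_Icc
    have := intervalIntegral.continuousOn_primitive_interval
      (a := (0:ℝ)) (b := t) (μ := volume) (f := g) (by rwa [uIcc_of_le ht0])
    rwa [uIcc_of_le ht0] at this
  have hF' : ∀ x ∈ Ico (0:ℝ) t, HasDerivWithinAt F (g x) (Ici x) x := by
    intro x hx
    have hxt₁ : x < t₁ := lt_trans hx.2 htt₁
    have hmem : Ico (0:ℝ) t₁ ∈ nhdsWithin x (Ioi x) := by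
      rw [mem_nhdsWithin]
      exact ⟨Iio t₁, isOpen_Iio, hxt₁, fun y hy => ⟨le_of_lt (lt_of_le_of_lt hx.1 hy.2), hy.1⟩⟩
    exact intervalIntegral.integral_hasDerivWithinAt_right (hgint x ⟨hx.1, hx.2.le⟩)
      ⟨Ico 0 t₁, hmem, hgcont.aestronglyMeasurable measurableSet_Ico⟩
      ((hgcont x ⟨hx.1, hxt₁⟩).mono_of_mem_nhdsWithin hmem)
  have hGB := norm_le_gronwallBound_of_norm_deriv_right_le (δ := 0) (K := C) (ε := A)
    hFcont hF' (by simp [hF_def]) ?_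
  · have hFt : F t ≤ gronwallBound 0 C A t := by
      have := hGB t ⟨ht0, le_refl t⟩
      rwa [sub_zero, Real.norm_of_nonneg (hFnn t ⟨ht0, le_refl t⟩)] at this
    have hfin : g t ≤ A * Real.exp (C * t) := by
      have h1 := key t ⟨ht0, le_refl t⟩
      have h2 : C * F t ≤ C * gronwallBound 0 C A t := mul_le_mul_of_nonneg_left hFt hCnn
      have h3 : C * gronwallBound 0 C A t + A ≤ A * Real.exp (C * t) := by
        rcases eq_or_ne C 0 with h | h
        · simp [h]
        · rw [gronwallBound_of_K_ne_0 h]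
          field_simp
          ring_nf
          linarith
      linarith
    -- conclude
    have hwt : ‖w t‖ = Real.exp (-(ω * t)) * g t := by
      rw [hg_def]
      simp only []
      rw [← mul_assoc, ← Real.exp_add, neg_add_cancel, Real.exp_zero, one_mul]
    have hexp : Real.exp (-(ω * t)) * (A * Real.exp (C * t)) = A * Real.exp ((C - ω) * t) := by
      rw [mul_comm (Real.exp (-(ω * t))), mul_assoc, ← Real.exp_add]
      ring_nf
    have hmono : Real.exp ((C - ω) * t) ≤ Real.exp (-ω' * t) := by
      apply Real.exp_le_exp.2
      nlinarith
    calc ‖w t‖ = Real.exp (-(ω * t)) * g t := hwt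
      _ ≤ Real.exp (-(ω * t)) * (A * Real.exp (C * t)) :=
          mul_le_mul_of_nonneg_left hfin (Real.exp_pos _).le
      _ = A * Real.exp ((C - ω) * t) := hexp
      _ ≤ A * Real.exp (-ω' * t) := mul_le_mul_of_nonneg_left hmono hAnn
      _ = N * Real.exp (-ω' * t) * ‖w₀‖ := by rw [hA_def]; ring
  · intro x hx
    rw [Real.norm_of_nonneg (hgnn x), Real.norm_of_nonneg (hFnn x ⟨hx.1, hx.2.le⟩)]
    exact key x ⟨hx.1, hx.2.le⟩
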